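/- For every integer n ≥ 0 and every direction d ∈ ℝ, the q-Laplace transform of order k of the monomial z ↦ z^n along direction d equals (q^{1/k})^{n(n−1)/2} · T^n; that is, (k/log q)·∫_{L_d} u^n / Θ_{q^{1/k}}(u/T) · du/u = q^{n(n−1)/(2k)} T^n, where Θ_{q^{1/k}}(z) = Σ_{p∈ℤ} q^{−p(p−1)/(2k)} z^p is the Jacobi theta function of order k and L_d = [0,∞)e^{id}. -/

import Mathlib

open Complex Set

/-- Jacobi theta function of order `k`:  `Θ_{q^{1/k}}(z) = Σ_{p∈ℤ} q^{−p(p−1)/(2k)} z^p`. -/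
noncomputable def thetaQ (q : ℝ) (k : ℕ) (z : ℂ) : ℂ :=
  ∑' p : ℤ, ((q : ℂ) ^ (((-(p * (p - 1)) : ℝ) / (2 * k) : ℝ) : ℂ)) * z ^ p

/-- The Gaussian-type theta series `Ψ_β(a) = Σ_p exp(-(β/2)(p-a)²)`. -/
noncomputable def psiGauss (β : ℝ) (a : ℂ) : ℂ :=
  ∑' p : ℤ, Complex.exp (((-β / 2 : ℝ) : ℂ) * ((p : ℂ) - a) ^ 2)

section lemmas

variable {β : ℝ} (hβ : 0 < β)

/-- factorization of the theta function via completing the square -/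
theorem theta_factor {q : ℝ} (hq : 1 < q) {k : ℕ} (hk : 1 ≤ k) (s : ℂ)
    (hβ' : β = Real.log q / k) :
    thetaQ q k (Complex.exp s)
      = Complex.exp ((s + β / 2) ^ 2 / (2 * β)) * psiGauss β (s / β + 1 / 2) := by
  have hL : 0 < Real.log q := Real.log_pos hq
  have hLc : (Real.log q : ℂ) ≠ 0 := by exact_mod_cast hL.ne'
  have hkc : (k : ℂ) ≠ 0 := by exact_mod_cast (by positivity : (0:ℝ) < (k:ℝ)).ne'
  have hβc : (β : ℂ) = (Real.log q : ℂ) / (k : ℂ) := by rw [hβ']; push_cast; ring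
  have hβ0 : (β : ℂ) ≠ 0 := by rw [hβc]; exact div_ne_zero hLc hkc
  unfold thetaQ psiGauss
  rw [← tsum_mul_left]
  refine tsum_congr fun p => ?_
  have hq0 : (q : ℂ) ≠ 0 := by
    exact_mod_cast (by positivity : (0:ℝ) < q).ne'
  rw [Complex.cpow_def_of_ne_zero hq0, ← Complex.ofReal_log (by positivity : (0:ℝ) ≤ q),
    ← Complex.exp_int_mul, ← Complex.exp_add, ← Complex.exp_add]
  congr 1
  push_cast
  rw [hβc]
  field_simp
  ring

end lemmas

section psi

variable {β : ℝ}

theorem psi_eq_theta2 (a : ℂ) :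
    psiGauss β a = Complex.exp (((-β / 2 : ℝ) : ℂ) * a ^ 2) *
      jacobiTheta₂ (-(β : ℂ) * Complex.I * a / (2 * Real.pi))
        (((β / (2 * Real.pi) : ℝ) : ℂ) * Complex.I) := by
  unfold psiGauss jacobiTheta₂
  rw [← tsum_mul_left]
  refine tsum_congr fun p => ?_
  unfold jacobiTheta₂_term
  rw [← Complex.exp_add]
  congr 1
  have hπ : (Real.pi : ℂ) ≠ 0 := by exact_mod_cast Real.pi_ne_zero
  push_cast
  field_simp
  ring_nf
  simp [Complex.I_sq]
  ring

theorem psi_summable (hβ : 0 < β) (a : ℂ) :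
    Summable (fun p : ℤ => Complex.exp (((-β / 2 : ℝ) : ℂ) * ((p : ℂ) - a) ^ 2)) := by
  have hτ : 0 < (((β / (2 * Real.pi) : ℝ) : ℂ) * Complex.I).im := by
    rw [Complex.mul_I_im, Complex.ofReal_re]
    exact div_pos hβ (by positivity)
  have h := (summable_jacobiTheta₂_term_iff (-(β : ℂ) * Complex.I * a / (2 * Real.pi))
    (((β / (2 * Real.pi) : ℝ) : ℂ) * Complex.I)).2 hτ
  have := h.mul_left (Complex.exp (((-β / 2 : ℝ) : ℂ) * a ^ 2))
  refine this.congr fun p => ?_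
  unfold jacobiTheta₂_term
  rw [← Complex.exp_add]
  congr 1
  have hπ : (Real.pi : ℂ) ≠ 0 := by exact_mod_cast Real.pi_ne_zero
  push_cast
  field_simp
  ring_nf
  simp [Complex.I_sq]
  ring

end psi

section psi2

variable {β : ℝ}

theorem psi_periodic (a : ℂ) (m : ℤ) : psiGauss β (a + m) = psiGauss β a := by
  unfold psiGauss
  rw [← (Equiv.subRight m).tsum_eq (fun p : ℤ =>
    Complex.exp (((-β / 2 : ℝ) : ℂ) * ((p : ℂ) - a) ^ 2))]
  refine tsum_congr fun p => ?_
  simp only [Equiv.subRight_apply]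
  congr 1
  push_cast
  ring

theorem psi_fold (a : ℂ) (n : ℤ) :
    (∑' m : ℤ, Complex.exp (((-β / 2 : ℝ) : ℂ) * (a + m - n) ^ 2)) = psiGauss β a := by
  unfold psiGauss
  rw [← (Equiv.subLeft n).tsum_eq (fun p : ℤ =>
    Complex.exp (((-β / 2 : ℝ) : ℂ) * ((p : ℂ) - a) ^ 2))]
  refine tsum_congr fun m => ?_
  simp only [Equiv.subLeft_apply]
  congr 1
  push_cast
  ring

theorem psi_differentiable (hβ : 0 < β) : Differentiable ℂ (psiGauss β) := by
  have hτ : 0 < (((β / (2 * Real.pi) : ℝ) : ℂ) * Complex.I).im := by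
    rw [Complex.mul_I_im, Complex.ofReal_re]
    exact div_pos hβ (by positivity)
  intro a
  have h1 : DifferentiableAt ℂ (fun z : ℂ => Complex.exp (((-β / 2 : ℝ) : ℂ) * z ^ 2)) a := by
    fun_prop
  have h2 : DifferentiableAt ℂ (fun z : ℂ =>
      jacobiTheta₂ (-(β : ℂ) * Complex.I * z / (2 * Real.pi))
        (((β / (2 * Real.pi) : ℝ) : ℂ) * Complex.I)) a := by
    have := differentiableAt_jacobiTheta₂_fst (-(β : ℂ) * Complex.I * a / (2 * Real.pi)) hτ
    have hlin : DifferentiableAt ℂ (fun z : ℂ => -(β : ℂ) * Complex.I * z / (2 * Real.pi)) a := by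
      fun_prop
    exact this.comp a hlin
  exact (h1.mul h2).congr_of_eventuallyEq (by filter_upwards with z using (psi_eq_theta2 z))

theorem psi_zero_ne (hβ : 0 < β) : psiGauss β 0 ≠ 0 := by
  have hsum : Summable (fun p : ℤ => Real.exp (-β / 2 * (p : ℝ) ^ 2)) := by
    have := psi_summable hβ (0 : ℂ)
    rw [← Complex.summable_ofReal]
    refine this.congr fun p => ?_
    rw [Complex.ofReal_exp]
    congr 1
    push_cast
    ring
  have hpos : (0 : ℝ) < ∑' p : ℤ, Real.exp (-β / 2 * (p : ℝ) ^ 2) := by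
    refine Summable.tsum_pos hsum (fun p => (Real.exp_pos _).le) 0 (Real.exp_pos _)
  have heq : psiGauss β 0 = ((∑' p : ℤ, Real.exp (-β / 2 * (p : ℝ) ^ 2) : ℝ) : ℂ) := by
    unfold psiGauss
    rw [Complex.ofReal_tsum]
    refine tsum_congr fun p => ?_
    rw [Complex.ofReal_exp]
    congr 1
    push_cast
    ring
  rw [heq]
  exact_mod_cast hpos.ne'

end psi2

section psi3

variable {β : ℝ}

theorem psi_zeros_finite (hβ : 0 < β) (y₀ : ℝ) :
    {x : ℝ | x ∈ Icc (0:ℝ) 1 ∧ psiGauss β (x + y₀ * I) = 0}.Finite := by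
  set Z := {x : ℝ | x ∈ Icc (0:ℝ) 1 ∧ psiGauss β (x + y₀ * I) = 0} with hZ
  by_contra hfin
  have hinf : Z.Infinite := hfin
  obtain ⟨x₀, hx₀K, hacc⟩ := hinf.exists_accPt_of_subset_isCompact
    isCompact_Icc (fun x hx => hx.1)
  set c : ℂ := (x₀ : ℂ) + y₀ * I with hc
  have hA : AnalyticAt ℂ (psiGauss β) c := (psi_differentiable hβ).analyticAt c
  rcases hA.eventually_eq_zero_or_eventually_ne_zero with hev | hev
  · -- psiGauss β ≡ 0 everywhere, contradicting psi_zero_ne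
    have hAOn : AnalyticOnNhd ℂ (psiGauss β) univ :=
      fun z _ => (psi_differentiable hβ).analyticAt z
    have h0 : EqOn (psiGauss β) 0 univ :=
      hAOn.eqOn_zero_of_preconnected_of_eventuallyEq_zero
        isPreconnected_univ (mem_univ c) hev
    exact psi_zero_ne hβ (h0 (mem_univ 0))
  · -- eventually nonzero near c punctured; contradicts accumulation of zeros
    set φ : ℝ → ℂ := fun x => (x : ℂ) + y₀ * I with hφ
    have hφcont : Filter.Tendsto φ (nhdsWithin x₀ {x₀}ᶜ) (nhds c) := by
      have : Continuous φ := by fun_prop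
      exact (this.tendsto x₀).mono_left nhdsWithin_le_nhds
    have hφne : ∀ᶠ x in nhdsWithin x₀ {x₀}ᶜ, φ x ∈ ({c} : Set ℂ)ᶜ := by
      filter_upwards [self_mem_nhdsWithin] with x hx
      simp only [mem_compl_iff, mem_singleton_iff]
      intro hxc
      apply hx
      have : (φ x).re = (c : ℂ).re := by rw [hxc]
      simpa [hφ, hc] using this
    have hφt : Filter.Tendsto φ (nhdsWithin x₀ {x₀}ᶜ) (nhdsWithin c {c}ᶜ) := by
      rw [tendsto_nhdsWithin_iff]
      exact ⟨hφcont, by simpa using hφne⟩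
    have hev' : ∀ᶠ x in nhdsWithin x₀ {x₀}ᶜ, psiGauss β (φ x) ≠ 0 := hφt.eventually hev
    have hfreq : ∃ᶠ x in nhdsWithin x₀ {x₀}ᶜ, x ∈ Z := by
      rw [accPt_iff_frequently] at hacc
      rw [frequently_nhdsWithin_iff]
      exact hacc.mono fun x hx => ⟨hx.2, hx.1⟩
    obtain ⟨x, hxZ, hxne⟩ := (hfreq.and_eventually hev').exists
    exact hxne hxZ.2

theorem psi_ae_ne (hβ : 0 < β) (y₀ : ℝ) :
    ∀ᵐ x : ℝ ∂(MeasureTheory.volume),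
      x ∈ Ico (0:ℝ) 1 → psiGauss β ((x : ℂ) + y₀ * I) ≠ 0 := by
  have hZ0 : MeasureTheory.volume
      {x : ℝ | x ∈ Icc (0:ℝ) 1 ∧ psiGauss β (x + y₀ * I) = 0} = 0 :=
    (psi_zeros_finite hβ y₀).measure_zero _
  filter_upwards [MeasureTheory.measure_eq_zero_iff_ae_notMem.mp hZ0] with x hx hxI h0
  exact hx ⟨Ico_subset_Icc_self hxI, h0⟩

end psi3

section fold

open MeasureTheory

variable {β : ℝ}

theorem fold_integral (hβ : 0 < β) (y₀ : ℝ) (C : ℂ) (n : ℤ)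
    (hg : Integrable (fun x : ℝ =>
      C * Complex.exp (((-β / 2 : ℝ) : ℂ) * (((x : ℂ) + y₀ * I) - n) ^ 2) /
        psiGauss β ((x : ℂ) + y₀ * I))) :
    (∫ x : ℝ, C * Complex.exp (((-β / 2 : ℝ) : ℂ) * (((x : ℂ) + y₀ * I) - n) ^ 2) /
        psiGauss β ((x : ℂ) + y₀ * I)) = C := by
  set g : ℝ → ℂ := fun x =>
    C * Complex.exp (((-β / 2 : ℝ) : ℂ) * (((x : ℂ) + y₀ * I) - n) ^ 2) /
      psiGauss β ((x : ℂ) + y₀ * I) with hgdef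
  have hmeas : Measurable g := by
    have h1 : Continuous (fun x : ℝ =>
        C * Complex.exp (((-β / 2 : ℝ) : ℂ) * (((x : ℂ) + y₀ * I) - n) ^ 2)) := by fun_prop
    have h2 : Continuous (fun x : ℝ => psiGauss β ((x : ℂ) + y₀ * I)) := by
      have := (psi_differentiable hβ).continuous
      fun_prop
    exact h1.measurable.div h2.measurable
  -- decompose ℝ into ⋃ m, Ico m (m+1)
  have hU : (⋃ m : ℤ, Ico (m : ℝ) (m + 1)) = univ := iUnion_Ico_intCast (α := ℝ)
  have hdis : Pairwise (Function.onFun Disjoint fun m : ℤ => Ico (m : ℝ) (m + 1)) :=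
    pairwise_disjoint_Ico_intCast (α := ℝ)
  have hmeasI : ∀ m : ℤ, MeasurableSet (Ico (m : ℝ) (m + 1)) := fun m => measurableSet_Ico
  have hInt : IntegrableOn g (⋃ m : ℤ, Ico (m : ℝ) (m + 1)) := by
    rw [hU, integrableOn_univ]; exact hg
  have step1 : (∫ x : ℝ, g x) = ∑' m : ℤ, ∫ x in Ico (m : ℝ) (m + 1), g x := by
    rw [← integral_iUnion hmeasI hdis hInt, hU, Measure.restrict_univ]
  -- translate each piece to Ico 0 1
  have hmp : ∀ m : ℤ, MeasurePreserving (fun x : ℝ => x + (m : ℝ)) volume volume :=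
    fun m => measurePreserving_add_right volume (m : ℝ)
  have hemb : ∀ m : ℤ, MeasurableEmbedding (fun x : ℝ => x + (m : ℝ)) :=
    fun m => (Homeomorph.addRight (m : ℝ)).measurableEmbedding
  have himg : ∀ m : ℤ, (fun x : ℝ => x + (m : ℝ)) '' Ico (0 : ℝ) 1 = Ico (m : ℝ) (m + 1) := by
    intro m
    rw [image_add_const_Ico]
    norm_num [add_comm]
  have step2 : ∀ m : ℤ, (∫ x in Ico (m : ℝ) (m + 1), g x)
      = ∫ x in Ico (0 : ℝ) 1, g (x + (m : ℝ)) := by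
    intro m
    rw [← himg m, (hmp m).setIntegral_image_emb (hemb m) g]
  -- lintegral bookkeeping for integral_tsum
  have hlin : ∑' m : ℤ, ∫⁻ x in Ico (0 : ℝ) 1, ‖g (x + (m : ℝ))‖₊ ≠ ⊤ := by
    have e1 : ∀ m : ℤ, (∫⁻ x in Ico (0 : ℝ) 1, ‖g (x + (m : ℝ))‖₊)
        = ∫⁻ x in Ico (m : ℝ) (m + 1), ‖g x‖₊ := by
      intro m
      rw [← himg m, ← (hmp m).setLIntegral_comp_emb (hemb m) (fun x => ‖g x‖₊)]
    rw [tsum_congr e1, ← lintegral_iUnion hmeasI hdis, hU, Measure.restrict_univ]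
    exact hg.2.ne
  have haesm : ∀ m : ℤ, AEStronglyMeasurable (fun x : ℝ => g (x + (m : ℝ)))
      (volume.restrict (Ico (0 : ℝ) 1)) :=
    fun m => ((hmeas.comp (measurable_add_const (m : ℝ))).aestronglyMeasurable)
  have step3 : ∑' m : ℤ, (∫ x in Ico (0 : ℝ) 1, g (x + (m : ℝ)))
      = ∫ x in Ico (0 : ℝ) 1, ∑' m : ℤ, g (x + (m : ℝ)) :=
    (integral_tsum haesm hlin).symm
  -- pointwise identity a.e.
  have hae : ∀ᵐ x : ℝ ∂(volume : Measure ℝ),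
      x ∈ Ico (0 : ℝ) 1 → (∑' m : ℤ, g (x + (m : ℝ))) = C := by
    filter_upwards [psi_ae_ne hβ y₀] with x hψ' hxI
    have hψ := hψ' hxI
    have hterm : ∀ m : ℤ, g (x + (m : ℝ))
        = C * Complex.exp (((-β / 2 : ℝ) : ℂ) * ((((x : ℂ) + y₀ * I) + m) - n) ^ 2) /
          psiGauss β ((x : ℂ) + y₀ * I) := by
      intro m
      rw [hgdef]
      simp only []
      rw [show (((x + (m : ℝ) : ℝ)) : ℂ) + y₀ * I = (((x : ℂ) + y₀ * I) + m) by push_cast; ring]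
      rw [psi_periodic ((x : ℂ) + y₀ * I) m]
    rw [tsum_congr hterm, tsum_div_const, tsum_mul_left, psi_fold ((x : ℂ) + y₀ * I) n,
      mul_div_assoc, div_self hψ, mul_one]
  have step4 : (∫ x in Ico (0 : ℝ) 1, ∑' m : ℤ, g (x + (m : ℝ))) = C := by
    have heq := setIntegral_congr_ae (μ := volume) (f := fun x : ℝ => ∑' m : ℤ, g (x + (m : ℝ)))
      (g := fun _ : ℝ => C) measurableSet_Ico hae
    rw [heq]
    simp [Real.volume_Ico]
  rw [step1, tsum_congr step2, step3, step4]

end fold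


open MeasureTheory

/-- the `q`-Laplace transform of order `k` of the monomial `z ↦ zⁿ` along
direction `d`, i.e. `(k/log q)·∫_{L_d} uⁿ / Θ_{q^{1/k}}(u/T) · du/u` with
`L_d = [0,∞)e^{id}`, equals `q^{n(n−1)/(2k)} Tⁿ`. -/
theorem qLaplace_monomial (q : ℝ) (hq : 1 < q) (k : ℕ) (hk : 1 ≤ k) (n : ℕ) (d : ℝ)
    (T : ℂ) (hT : T ≠ 0)
    (hint : MeasureTheory.IntegrableOn
      (fun r : ℝ => ((r : ℂ) * Complex.exp (Complex.I * d)) ^ n /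
          thetaQ q k (((r : ℂ) * Complex.exp (Complex.I * d)) / T) / (r : ℂ))
      (Set.Ioi (0 : ℝ))) :
    ((k : ℂ) / (Real.log q : ℂ)) *
      ∫ r in Set.Ioi (0 : ℝ),
        ((r : ℂ) * Complex.exp (Complex.I * d)) ^ n /
          thetaQ q k (((r : ℂ) * Complex.exp (Complex.I * d)) / T) / (r : ℂ)
      = ((q : ℂ) ^ (((n * (n - 1) : ℝ) / (2 * k) : ℝ) : ℂ)) * T ^ n := by
  -- setup
  have hL : 0 < Real.log q := Real.log_pos hq
  have hk0 : (0 : ℝ) < k := by exact_mod_cast hk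
  set β : ℝ := Real.log q / k with hβdef
  have hβ : 0 < β := div_pos hL hk0
  have hβc : (β : ℂ) ≠ 0 := by exact_mod_cast hβ.ne'
  set γ : ℂ := Complex.I * d - Complex.log T with hγdef
  set t₀ : ℝ := -γ.re - β / 2 with ht₀def
  set y₀ : ℝ := γ.im / β with hy₀def
  have hby : (β : ℝ) * y₀ = γ.im := by rw [hy₀def]; field_simp
  set F : ℝ → ℂ := fun r : ℝ => ((r : ℂ) * Complex.exp (Complex.I * d)) ^ n /
      thetaQ q k (((r : ℂ) * Complex.exp (Complex.I * d)) / T) / (r : ℂ) with hFdef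
  set H : ℝ → ℂ := fun t : ℝ => Real.exp t • F (Real.exp t) with hHdef
  set C : ℂ := Complex.exp ((n : ℂ) * (Complex.I * d) - n * γ + β * n * (n - 1) / 2) with hCdef
  -- pointwise identity for H
  have hH : ∀ t : ℝ, H t = Complex.exp ((n : ℂ) * (t + Complex.I * d)) /
      thetaQ q k (Complex.exp (t + γ)) := by
    intro t
    have he : ((Real.exp t : ℝ) : ℂ) = Complex.exp (t : ℂ) := Complex.ofReal_exp t
    have harg : Complex.exp ((t : ℂ) + γ)
        = (Complex.exp (t : ℂ) * Complex.exp (Complex.I * d)) / T := by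
      rw [show (t : ℂ) + γ = ((t : ℂ) + Complex.I * d) - Complex.log T by rw [hγdef]; ring,
        Complex.exp_sub, Complex.exp_log hT, Complex.exp_add]
    have hpow : (Complex.exp (t : ℂ) * Complex.exp (Complex.I * d)) ^ n
        = Complex.exp ((n : ℂ) * (t + Complex.I * d)) := by
      rw [← Complex.exp_add, ← Complex.exp_nat_mul]
    rw [hHdef]
    simp only [hFdef]
    rw [Complex.real_smul, he, harg, hpow]
    by_cases hθ : thetaQ q k (Complex.exp (t : ℂ) * Complex.exp (Complex.I * d) / T) = 0
    · simp [hθ]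
    · field_simp
  -- auxiliary identity
  have ht₀γ : (t₀ : ℂ) + γ = (β : ℂ) * y₀ * Complex.I - β / 2 := by
    have h1 : ((γ.re : ℂ)) + (γ.im : ℂ) * Complex.I = γ := Complex.re_add_im γ
    have h2 : ((β : ℝ) : ℂ) * ((y₀ : ℝ) : ℂ) = ((γ.im : ℝ) : ℂ) := by
      rw [← Complex.ofReal_mul]; exact_mod_cast congrArg Complex.ofReal hby
    rw [ht₀def]
    push_cast
    linear_combination -h1 - Complex.I * h2
  clear_value β γ t₀ y₀
  -- pointwise identity for the substituted integrand
  have hHG : ∀ x : ℝ, (β : ℂ) * H (β * x + t₀) =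
      ((β : ℂ) * C) * Complex.exp (((-β / 2 : ℝ) : ℂ) *
          (((x : ℂ) + y₀ * Complex.I) - ((n : ℤ) : ℂ)) ^ 2) /
        psiGauss β ((x : ℂ) + y₀ * Complex.I) := by
    intro x
    set a : ℂ := (x : ℂ) + y₀ * Complex.I with hadef
    have hs0 : ((β * x + t₀ : ℝ) : ℂ) + γ = (β : ℂ) * a - β / 2 := by
      rw [hadef]
      push_cast
      linear_combination ht₀γ
    have hs1 : (((β * x + t₀ : ℝ) : ℂ) + γ) / β + 1 / 2 = a := by
      rw [hs0]; field_simp; ring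
    have hs2 : ((((β * x + t₀ : ℝ) : ℂ) + γ) + β / 2) ^ 2 / (2 * β)
        = β * a ^ 2 / 2 := by
      rw [hs0]; field_simp; ring
    have htv : ((β * x + t₀ : ℝ) : ℂ) = ((β : ℂ) * a - β / 2) - γ := by
      linear_combination hs0
    have hexp : Complex.exp ((n : ℂ) * ((((β : ℂ) * a - β / 2) - γ) + Complex.I * d))
        = C * Complex.exp (((-β / 2 : ℝ) : ℂ) * (a - ((n : ℤ) : ℂ)) ^ 2)
            * Complex.exp ((β : ℂ) * a ^ 2 / 2) := by
      rw [hCdef, ← Complex.exp_add, ← Complex.exp_add]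
      congr 1
      push_cast
      ring
    rw [hH (β * x + t₀), theta_factor hq hk (((β * x + t₀ : ℝ) : ℂ) + γ) hβdef, hs1, hs2,
      htv, hexp, mul_comm (Complex.exp ((β : ℂ) * a ^ 2 / 2)) (psiGauss β a),
      mul_div_mul_right _ _ (Complex.exp_ne_zero _)]
    ring
  -- first change of variables : r = exp t
  have hIoi : Ioi (0 : ℝ) = Real.exp '' univ := by
    rw [image_univ, Real.range_exp]
  have hderiv : ∀ x ∈ (univ : Set ℝ), HasDerivWithinAt Real.exp (Real.exp x) univ x :=
    fun x _ => (Real.hasDerivAt_exp x).hasDerivWithinAt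
  have hinj : InjOn Real.exp univ := Real.exp_injective.injOn
  have habs : ∀ t : ℝ, |Real.exp t| • F (Real.exp t) = H t := by
    intro t
    rw [hHdef]
    simp [abs_of_pos (Real.exp_pos t)]
  have hcov1 : (∫ r in Ioi (0 : ℝ), F r) = ∫ t : ℝ, H t := by
    rw [hIoi, integral_image_eq_integral_abs_deriv_smul MeasurableSet.univ hderiv hinj F,
      Measure.restrict_univ]
    exact integral_congr_ae (Filter.Eventually.of_forall habs)
  have hintH : Integrable H := by
    have h1 := (integrableOn_image_iff_integrableOn_abs_deriv_smul
      MeasurableSet.univ hderiv hinj F).mp (by rw [← hIoi]; exact hint)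
    rw [integrableOn_univ] at h1
    exact h1.congr (Filter.Eventually.of_forall habs)
  -- second change of variables : t = β x + t₀
  set φ : ℝ → ℝ := fun x => β * x + t₀ with hφdef
  have hφderiv : ∀ x ∈ (univ : Set ℝ), HasDerivWithinAt φ β univ x := by
    intro x _
    have h1 : HasDerivAt φ β x := by
      simpa [hφdef] using ((hasDerivAt_id x).const_mul β).add_const t₀
    exact h1.hasDerivWithinAt
  have hφinj : InjOn φ univ := by
    intro x _ y _ hxy
    simp only [hφdef] at hxy
    have h2 : β * x = β * y := by linarith
    exact mul_left_cancel₀ hβ.ne' h2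
  have hφimg : φ '' univ = univ := by
    apply eq_univ_of_forall
    intro y
    refine ⟨(y - t₀) / β, mem_univ _, ?_⟩
    simp only [hφdef]
    field_simp
    ring
  have hsmul : ∀ x : ℝ, |β| • H (φ x) = ((β : ℂ) * C) * Complex.exp (((-β / 2 : ℝ) : ℂ) *
          (((x : ℂ) + y₀ * Complex.I) - ((n : ℤ) : ℂ)) ^ 2) /
        psiGauss β ((x : ℂ) + y₀ * Complex.I) := by
    intro x
    rw [abs_of_pos hβ, Complex.real_smul, hHG x]
  have hcov2 : (∫ t : ℝ, H t) = ∫ x : ℝ, ((β : ℂ) * C) * Complex.exp (((-β / 2 : ℝ) : ℂ) *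
          (((x : ℂ) + y₀ * Complex.I) - ((n : ℤ) : ℂ)) ^ 2) /
        psiGauss β ((x : ℂ) + y₀ * Complex.I) := by
    have e1 : (∫ t : ℝ, H t) = ∫ t in φ '' univ, H t := by
      rw [hφimg, setIntegral_univ]
    rw [e1, integral_image_eq_integral_abs_deriv_smul MeasurableSet.univ hφderiv hφinj H,
      setIntegral_univ]
    exact integral_congr_ae (Filter.Eventually.of_forall hsmul)
  have hintG : Integrable (fun x : ℝ => ((β : ℂ) * C) * Complex.exp (((-β / 2 : ℝ) : ℂ) *
          (((x : ℂ) + y₀ * Complex.I) - ((n : ℤ) : ℂ)) ^ 2) /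
        psiGauss β ((x : ℂ) + y₀ * Complex.I)) := by
    have h1 := (integrableOn_image_iff_integrableOn_abs_deriv_smul
      MeasurableSet.univ hφderiv hφinj H).mp (by rw [hφimg, integrableOn_univ]; exact hintH)
    rw [integrableOn_univ] at h1
    exact h1.congr (Filter.Eventually.of_forall hsmul)
  have hfold := fold_integral hβ y₀ ((β : ℂ) * C) (n : ℤ) hintG
  -- put everything together
  have hLc : (Real.log q : ℂ) ≠ 0 := by exact_mod_cast hL.ne'
  have hkc : (k : ℂ) ≠ 0 := by exact_mod_cast hk0.ne'
  have hβcc : (β : ℂ) = (Real.log q : ℂ) / (k : ℂ) := by rw [hβdef]; push_cast; ring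
  rw [hcov1, hcov2, hfold, hβcc]
  have hfin : ((k : ℂ) / (Real.log q : ℂ)) * ((Real.log q : ℂ) / (k : ℂ) * C) = C := by
    field_simp
  rw [hfin]
  -- evaluate the constant C
  rw [hCdef, hγdef]
  have hsplit : (n : ℂ) * (Complex.I * d) - n * (Complex.I * d - Complex.log T)
      + (β : ℂ) * n * (n - 1) / 2
      = ((β : ℂ) * n * (n - 1) / 2) + (n : ℂ) * Complex.log T := by ring
  rw [hsplit, Complex.exp_add, Complex.exp_nat_mul, Complex.exp_log hT]
  congr 1
  have hq0 : (q : ℂ) ≠ 0 := by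
    exact_mod_cast (lt_trans one_pos hq).ne'
  rw [Complex.cpow_def_of_ne_zero hq0, ← Complex.ofReal_log (le_of_lt (lt_trans one_pos hq)),
    hβcc]
  congr 1
  push_cast
  field_simp
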